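/- arXiv:2007.02623 — 3 statements merged into one kernel-verified Lean document; each statement's English description precedes it below -/
import Mathlib

section
/- Let p be an odd prime, d an odd divisor of p-1, m = (p-1)/d, and χ an odd Dirichlet character mod p of order m. Then ((4d+1)p + d + 1)/12 ≤ A(p,d) ≤ ((5d+1)p + d + 1)/12, where A(p,d) = (1/(p-1))·Σ_{N=1}^{p-1} #{(n₁,n₂) : 1 ≤ n₁,n₂ ≤ N, χ(n₁) = χ(n₂)}. -/
open scoped Classical
open Finset

namespace ElmaAux

lemma sum_range_id_real (n : ℕ) : ∑ i ∈ range n, (i:ℝ) = n*(n-1)/2 := by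
  induction n with
  | zero => simp
  | succ k ih => rw [Finset.sum_range_succ, ih]; push_cast; ring

lemma sum_range_sq_real (n : ℕ) : ∑ i ∈ range n, (i:ℝ)^2 = n*(n-1)*(2*n-1)/6 := by
  induction n with
  | zero => simp
  | succ k ih => rw [Finset.sum_range_succ, ih]; push_cast; ring

variable {p : ℕ} [NeZero p]

/-- the set of nonzero residues -/
noncomputable def sS (p : ℕ) [NeZero p] : Finset (ZMod p) := Finset.univ.erase 0

lemma mem_sS {x : ZMod p} : x ∈ sS p ↔ x ≠ 0 := by simp [sS]

lemma cast_val_eq (a : ZMod p) : ((a.val : ZMod p)) = a := by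
  simp [ZMod.natCast_val, ZMod.cast_id]

lemma sum_val_univ (f : ℕ → ℝ) : ∑ x : ZMod p, f x.val = ∑ i ∈ range p, f i := by
  refine Finset.sum_nbij' (fun x => x.val) (fun i => (i : ZMod p)) ?_ ?_ ?_ ?_ ?_
  · intro a _; exact Finset.mem_range.mpr (ZMod.val_lt a)
  · intro i _; exact Finset.mem_univ _
  · intro a _; exact cast_val_eq a
  · intro i hi; exact ZMod.val_cast_of_lt (Finset.mem_range.mp hi)
  · intro a _; rfl

lemma sum_val_s (f : ℕ → ℝ) : ∑ x ∈ sS p, f x.val = (∑ i ∈ range p, f i) - f 0 := by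
  have h0 : (0 : ZMod p) ∈ Finset.univ := Finset.mem_univ _
  have := Finset.add_sum_erase Finset.univ (fun x : ZMod p => f x.val) h0
  rw [← sum_val_univ f]
  rw [← this]
  simp [sS, ZMod.val_zero]

lemma sum_s_V : ∑ x ∈ sS p, (x.val : ℝ) = p*(p-1)/2 := by
  rw [sum_val_s (p := p) (fun i => (i:ℝ)), sum_range_id_real]; norm_num

lemma sum_s_V2 : ∑ x ∈ sS p, (x.val : ℝ)^2 = p*(p-1)*(2*p-1)/6 := by
  rw [sum_val_s (p := p) (fun i => (i:ℝ)^2), sum_range_sq_real]; norm_num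

lemma val_ne_of_ne {a b : ZMod p} (h : a ≠ b) : a.val ≠ b.val := by
  intro hv; exact h (by rw [← cast_val_eq a, ← cast_val_eq b, hv])

lemma sum_mul_shift [Fact p.Prime] {c : ZMod p} (hc : c ≠ 0) (f : ZMod p → ℝ) :
    ∑ x ∈ sS p, f (c * x) = ∑ x ∈ sS p, f x := by
  refine Finset.sum_nbij' (fun x => c * x) (fun y => c⁻¹ * y) ?_ ?_ ?_ ?_ ?_
  · intro a ha; exact mem_sS.mpr (mul_ne_zero hc (mem_sS.mp ha))
  · intro a ha; exact mem_sS.mpr (mul_ne_zero (inv_ne_zero hc) (mem_sS.mp ha))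
  · intro a _; field_simp
  · intro a _; field_simp
  · intro a _; rfl

lemma val_sub_cases {a b : ZMod p} (hab : a ≠ b) :
    ((a-b).val : ℝ) = if b.val < a.val then (a.val:ℝ) - b.val else (a.val:ℝ) - b.val + p := by
  rcases lt_or_ge b.val a.val with h | h
  · rw [if_pos h, ZMod.val_sub h.le]
    push_cast [h.le]; ring
  · have hlt : a.val < b.val := lt_of_le_of_ne h (val_ne_of_ne hab)
    rw [if_neg (by omega)]
    have hba : b - a ≠ 0 := sub_ne_zero.mpr (Ne.symm hab)
    have h1 : a - b = -(b - a) := by ring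
    haveI : NeZero (b - a) := ⟨hba⟩
    rw [h1, ZMod.val_neg_of_ne_zero (b-a), ZMod.val_sub hlt.le]
    have hbp := ZMod.val_lt b
    have h2 : b.val - a.val ≤ p := by omega
    push_cast [h2, hlt.le]
    ring

/-- helper polynomials -/
noncomputable def U (p : ℕ) (x : ℕ) : ℝ := (x:ℝ)*((p:ℝ)-x)/2 - (p:ℝ)*x
noncomputable def W (p : ℕ) (x : ℕ) : ℝ :=
  ((p:ℝ)-1-x)*((p:ℝ)-x)/2 + ((x:ℝ)-1)*(x:ℝ)/2 + (x:ℝ)*((p:ℝ)-x)/2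

lemma per_pair (a b : ZMod p) (hab : a ≠ b) :
    (p:ℝ) * ((p:ℝ) - max (a.val:ℝ) (b.val:ℝ)) =
      W p ((a-b).val) + U p a.val + U p b.val + (a.val:ℝ)*(b.val:ℝ) + ((p:ℝ)^2+(p:ℝ))/2 := by
  have hw := val_sub_cases hab
  rcases lt_or_ge b.val a.val with h | h
  · rw [if_pos h] at hw
    rw [max_eq_left (by exact_mod_cast h.le), W, U, U, hw]; ring
  · have hlt : a.val < b.val := lt_of_le_of_ne h (val_ne_of_ne hab)
    rw [if_neg (by omega)] at hw
    rw [max_eq_right (by exact_mod_cast hlt.le), W, U, U, hw]; ring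

omit [NeZero p] in
lemma quad_sum (A B C : ℝ) :
    ∑ i ∈ Finset.range p, (A + B*i + C*(i:ℝ)^2)
      = p*A + B*((p:ℝ)*(p-1)/2) + C*((p:ℝ)*(p-1)*(2*p-1)/6) := by
  rw [Finset.sum_add_distrib, Finset.sum_add_distrib, ← Finset.mul_sum, ← Finset.mul_sum,
    sum_range_id_real, sum_range_sq_real, Finset.sum_const, Finset.card_range]
  ring

lemma card_sS : (sS p).card = p - 1 := by
  rw [sS, Finset.card_erase_of_mem (Finset.mem_univ _), Finset.card_univ, ZMod.card]

lemma per_c [Fact p.Prime] {c : ZMod p} (hc0 : c ≠ 0) (hc1 : c ≠ 1) :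
    ∑ b ∈ sS p, (p:ℝ) * ((p:ℝ) - max ((c*b).val:ℝ) (b.val:ℝ))
      = (p:ℝ)*((p:ℝ)^2-1)/12 + ∑ b ∈ sS p, ((c*b).val:ℝ) * (b.val:ℝ) := by
  have hstep : ∀ b ∈ sS p,
      (p:ℝ) * ((p:ℝ) - max ((c*b).val:ℝ) (b.val:ℝ))
        = W p (((c-1)*b).val) + U p (c*b).val + U p b.val
          + ((c*b).val:ℝ) * (b.val:ℝ) + ((p:ℝ)^2+(p:ℝ))/2 := by
    intro b hb
    have hb0 : b ≠ 0 := mem_sS.mp hb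
    have hab : c*b ≠ b := by
      intro h
      apply hc1
      have h0 : (c - 1) * b = 0 := by rw [sub_mul, one_mul, h, sub_self]
      rcases mul_eq_zero.mp h0 with h' | h'
      · exact sub_eq_zero.mp h'
      · exact absurd h' hb0
    have h1 : c*b - b = (c-1)*b := by ring
    have := per_pair (c*b) b hab
    rw [h1] at this
    exact this
  rw [Finset.sum_congr rfl hstep]
  have hc1' : c - 1 ≠ 0 := sub_ne_zero.mpr hc1
  have key : ∑ x ∈ sS p, (W p x.val + U p x.val + U p x.val)
      = (p-1)*((p:ℝ)^2-(p:ℝ))/2 - (3*(p:ℝ)/2)*((p:ℝ)*(p-1)/2) - (1/2)*((p:ℝ)*(p-1)*(2*p-1)/6) := by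
    have hW : ∀ x : ℕ, W p x + U p x + U p x
        = ((p:ℝ)^2-(p:ℝ))/2 + (-(3*(p:ℝ)/2))*x + (-(1/2))*(x:ℝ)^2 := by
      intro x; rw [W, U]; ring
    have h2 := sum_val_s (p := p) (fun i => ((p:ℝ)^2-(p:ℝ))/2 + (-(3*(p:ℝ)/2))*i + (-(1/2))*(i:ℝ)^2)
    rw [quad_sum] at h2
    calc ∑ x ∈ sS p, (W p x.val + U p x.val + U p x.val)
        = ∑ x ∈ sS p, (((p:ℝ)^2-(p:ℝ))/2 + (-(3*(p:ℝ)/2))*(x.val:ℝ) + (-(1/2))*(x.val:ℝ)^2) :=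
          Finset.sum_congr rfl (fun x _ => hW x.val)
      _ = _ := by rw [h2]; push_cast; ring
  have hconst : ∑ _b ∈ sS p, ((p:ℝ)^2+(p:ℝ))/2 = ((p:ℝ)-1)*(((p:ℝ)^2+(p:ℝ))/2) := by
    rw [Finset.sum_const, card_sS]
    have hp1 : (1:ℕ) ≤ p := Nat.one_le_iff_ne_zero.mpr (NeZero.ne p)
    rw [nsmul_eq_mul, Nat.cast_sub hp1]
    push_cast
    ring
  simp only [Finset.sum_add_distrib]
  rw [sum_mul_shift hc1' (fun x => W p x.val), sum_mul_shift hc0 (fun x => U p x.val), hconst]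
  rw [Finset.sum_add_distrib, Finset.sum_add_distrib] at key
  linear_combination key

section Char
variable {p : ℕ} [NeZero p] [Fact p.Prime] (χ : DirichletCharacter ℂ p)

lemma chi_ne_zero {x : ZMod p} (hx : x ≠ 0) : χ x ≠ 0 := by
  have h : χ x * χ x⁻¹ = 1 := by
    rw [← map_mul, mul_inv_cancel₀ hx, map_one]
  intro h0
  rw [h0, zero_mul] at h
  exact zero_ne_one h

/-- kernel elements -/
noncomputable def Kf : Finset (ZMod p) := (sS p).filter (fun z => χ z = 1)
/-- fiber of a value -/
noncomputable def fib (v : ℂ) : Finset (ZMod p) := (sS p).filter (fun z => χ z = v)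
/-- set of values -/
noncomputable def Iv : Finset ℂ := (sS p).image (fun z => χ z)

lemma bij_pairs (f : ZMod p → ZMod p → ℝ) :
    ∑ q ∈ ((sS p ×ˢ sS p).filter (fun q => χ q.1 = χ q.2)), f q.1 q.2
      = ∑ c ∈ Kf χ, ∑ b ∈ sS p, f (c*b) b := by
  rw [← Finset.sum_product']
  refine Finset.sum_nbij' (fun q => (q.1 * q.2⁻¹, q.2)) (fun q => (q.1 * q.2, q.2)) ?_ ?_ ?_ ?_ ?_
  · rintro ⟨a, b⟩ hab
    rw [Finset.mem_filter, Finset.mem_product] at hab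
    obtain ⟨⟨ha, hb⟩, hv⟩ := hab
    have ha0 : a ≠ 0 := mem_sS.mp ha
    have hb0 : b ≠ 0 := mem_sS.mp hb
    rw [Finset.mem_product]
    constructor
    · rw [Kf, Finset.mem_filter]
      refine ⟨mem_sS.mpr (mul_ne_zero ha0 (inv_ne_zero hb0)), ?_⟩
      have h1 : χ (a * b⁻¹) * χ b = χ b := by
        rw [← map_mul]
        have : a * b⁻¹ * b = a := by field_simp
        rw [this, hv]
      have := mul_right_cancel₀ (chi_ne_zero χ hb0) (h1.trans (one_mul (χ b)).symm)
      exact this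
    · exact hb
  · rintro ⟨c, b⟩ hcb
    rw [Finset.mem_product] at hcb
    obtain ⟨hc, hb⟩ := hcb
    rw [Kf, Finset.mem_filter] at hc
    have hc0 : c ≠ 0 := mem_sS.mp hc.1
    have hb0 : b ≠ 0 := mem_sS.mp hb
    rw [Finset.mem_filter, Finset.mem_product]
    refine ⟨⟨mem_sS.mpr (mul_ne_zero hc0 hb0), hb⟩, ?_⟩
    show χ (c * b) = χ b
    rw [map_mul, hc.2, one_mul]
  · rintro ⟨a, b⟩ hab
    rw [Finset.mem_filter, Finset.mem_product] at hab
    have hb0 : b ≠ 0 := mem_sS.mp hab.1.2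
    simp only [Prod.mk.injEq]
    refine ⟨by field_simp, trivial⟩
  · rintro ⟨c, b⟩ hcb
    rw [Finset.mem_product] at hcb
    have hb0 : b ≠ 0 := mem_sS.mp hcb.2
    simp only [Prod.mk.injEq]
    refine ⟨by field_simp, trivial⟩
  · rintro ⟨a, b⟩ hab
    rw [Finset.mem_filter, Finset.mem_product] at hab
    have hb0 : b ≠ 0 := mem_sS.mp hab.1.2
    simp only []
    congr 1
    field_simp

lemma fib_card {a : ZMod p} (ha : a ∈ sS p) : (fib χ (χ a)).card = (Kf χ).card := by
  have ha0 : a ≠ 0 := mem_sS.mp ha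
  refine Finset.card_nbij' (fun z => z * a⁻¹) (fun z => z * a) ?_ ?_ ?_ ?_
  · intro z hz
    rw [fib, Finset.mem_coe, Finset.mem_filter] at hz
    have hz0 : z ≠ 0 := mem_sS.mp hz.1
    rw [Finset.mem_coe, Kf, Finset.mem_filter]
    refine ⟨mem_sS.mpr (mul_ne_zero hz0 (inv_ne_zero ha0)), ?_⟩
    have h1 : χ (z * a⁻¹) * χ a = χ a := by
      rw [← map_mul]
      have : z * a⁻¹ * a = z := by field_simp
      rw [this, hz.2]
    exact mul_right_cancel₀ (chi_ne_zero χ ha0) (h1.trans (one_mul (χ a)).symm)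
  · intro z hz
    rw [Kf, Finset.mem_coe, Finset.mem_filter] at hz
    have hz0 : z ≠ 0 := mem_sS.mp hz.1
    rw [Finset.mem_coe, fib, Finset.mem_filter]
    refine ⟨mem_sS.mpr (mul_ne_zero hz0 ha0), ?_⟩
    rw [map_mul, hz.2, one_mul]
  · intro z _; field_simp
  · intro z _; field_simp

lemma sum_fiber (f : ZMod p → ℝ) :
    ∑ v ∈ Iv χ, ∑ x ∈ fib χ v, f x = ∑ x ∈ sS p, f x := by
  exact Finset.sum_fiberwise_of_maps_to (fun x hx => Finset.mem_image_of_mem _ hx) f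

lemma card_fibers : (Iv χ).card * (Kf χ).card = p - 1 := by
  have h := sum_fiber χ (fun _ => (1:ℝ))
  simp only [Finset.sum_const, nsmul_eq_mul, mul_one] at h
  have h2 : ∀ v ∈ Iv χ, ((fib χ v).card : ℝ) = ((Kf χ).card : ℝ) := by
    intro v hv
    rw [Iv, Finset.mem_image] at hv
    obtain ⟨a, ha, rfl⟩ := hv
    rw [fib_card χ ha]
  rw [Finset.sum_congr rfl h2, Finset.sum_const, nsmul_eq_mul] at h
  rw [card_sS] at h
  exact_mod_cast h

lemma pairs_to_fibers :
    ∑ q ∈ ((sS p ×ˢ sS p).filter (fun q => χ q.1 = χ q.2)), (q.1.val : ℝ) * (q.2.val : ℝ)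
      = ∑ v ∈ Iv χ, (∑ x ∈ fib χ v, (x.val : ℝ))^2 := by
  have hset : ((sS p ×ˢ sS p).filter (fun q => χ q.1 = χ q.2))
      = (Iv χ).biUnion (fun v => fib χ v ×ˢ fib χ v) := by
    ext ⟨a, b⟩
    simp only [Finset.mem_filter, Finset.mem_product, Finset.mem_biUnion, Iv, fib,
      Finset.mem_image]
    constructor
    · rintro ⟨⟨ha, hb⟩, hv⟩
      exact ⟨χ a, ⟨a, ha, rfl⟩, ⟨ha, rfl⟩, ⟨hb, hv.symm⟩⟩
    · rintro ⟨v, _, ⟨ha, hva⟩, ⟨hb, hvb⟩⟩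
      exact ⟨⟨ha, hb⟩, by rw [hva, hvb]⟩
  rw [hset, Finset.sum_biUnion]
  · refine Finset.sum_congr rfl ?_
    intro v _
    rw [Finset.sum_product]
    rw [sq]
    rw [Finset.sum_mul_sum]
  · intro v hv w hw hvw
    refine Finset.disjoint_left.mpr ?_
    rintro ⟨a, b⟩ hqa hqb
    rw [Finset.mem_product, fib, Finset.mem_filter, Finset.mem_filter] at hqa hqb
    exact hvw (hqa.1.2 ▸ hqb.1.2 ▸ rfl)

end Char
section Card
variable {p : ℕ} [NeZero p] [Fact p.Prime]

set_option maxHeartbeats 1000000 in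
lemma cardKf (χ : DirichletCharacter ℂ p) {m d : ℕ} (hord : orderOf χ = m)
    (hdm : d * m = p - 1) (hm0 : 0 < m) : (Kf χ).card = d := by
  classical
  obtain ⟨g, hg⟩ := IsCyclic.exists_generator (α := (ZMod p)ˣ)
  set φ := MulChar.equivToUnitHom χ with hφdef
  have hφord : orderOf φ = m := by
    rw [← hord]
    exact orderOf_injective (MulChar.mulEquivToUnitHom (R := ZMod p) (R' := ℂ)).toMonoidHom
      (MulChar.mulEquivToUnitHom (R := ZMod p) (R' := ℂ)).injective χ
  have hgord : orderOf g = p - 1 := by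
    rw [orderOf_eq_card_of_forall_mem_zpowers hg, Nat.card_eq_fintype_card, ZMod.card_units]
  have hpow : ∀ x : (ZMod p)ˣ, ∃ n : ℕ, g ^ n = x := by
    intro x
    have h := hg x
    rw [← mem_powers_iff_mem_zpowers] at h
    exact (Submonoid.mem_powers_iff _ _).mp h
  have hζ : orderOf (φ g) = m := by
    have hdvd1 : orderOf (φ g) ∣ m := by
      apply orderOf_dvd_of_pow_eq_one
      have h : (φ ^ m) g = 1 := by rw [← hφord, pow_orderOf_eq_one φ]; rfl
      rwa [MonoidHom.pow_apply] at h
    have hdvd2 : m ∣ orderOf (φ g) := by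
      rw [← hφord]
      apply orderOf_dvd_of_pow_eq_one
      ext x
      obtain ⟨n, rfl⟩ := hpow x
      rw [MonoidHom.pow_apply, MonoidHom.one_apply, map_pow, ← pow_mul, mul_comm, pow_mul,
        pow_orderOf_eq_one, one_pow]
    exact Nat.dvd_antisymm hdvd1 hdvd2
  have hcount : ((Finset.range (p-1)).filter (fun k => m ∣ k)).card = (Kf χ).card := by
    refine Finset.card_bij (fun k _ => ((g^k : (ZMod p)ˣ) : ZMod p)) ?_ ?_ ?_
    · intro k hk
      rw [Finset.mem_filter, Finset.mem_range] at hk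
      rw [Kf, Finset.mem_filter]
      refine ⟨mem_sS.mpr (g^k).ne_zero, ?_⟩
      have h1 : χ ((g^k : (ZMod p)ˣ) : ZMod p) = ((φ (g^k) : ℂˣ) : ℂ) := by
        rw [MulChar.coe_equivToUnitHom]
      rw [h1, map_pow]
      have h2 : (φ g) ^ k = 1 := by
        rw [← orderOf_dvd_iff_pow_eq_one, hζ]
        exact hk.2
      rw [h2]
      simp
    · intro k hk l hl hkl
      rw [Finset.mem_filter, Finset.mem_range] at hk hl
      have h : g ^ k = g ^ l := Units.ext hkl
      have hinj : Set.InjOn (g ^ ·) (Set.Iio (orderOf g)) := pow_injOn_Iio_orderOf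
      rw [hgord] at hinj
      exact hinj (Set.mem_Iio.mpr hk.1) (Set.mem_Iio.mpr hl.1) h
    · intro z hz
      rw [Kf, Finset.mem_filter] at hz
      have hz0 : z ≠ 0 := mem_sS.mp hz.1
      have hu : IsUnit z := isUnit_iff_ne_zero.mpr hz0
      obtain ⟨n, hn⟩ := hpow hu.unit
      have hp1 : 0 < p - 1 := by
        have := (Fact.out : p.Prime).two_le
        omega
      refine ⟨n % (p-1), ?_, ?_⟩
      · rw [Finset.mem_filter, Finset.mem_range]
        refine ⟨Nat.mod_lt _ hp1, ?_⟩
        have h1 : ((φ hu.unit : ℂˣ) : ℂ) = χ z := by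
          rw [MulChar.coe_equivToUnitHom, IsUnit.unit_spec]
        have h2 : φ hu.unit = 1 := Units.ext (by rw [h1, hz.2]; simp)
        have h2' : (φ g) ^ n = 1 := by rw [← map_pow, hn, h2]
        have h3 : m ∣ n := by rw [← hζ]; exact orderOf_dvd_of_pow_eq_one h2'
        have h4 : m ∣ p - 1 := ⟨d, by rw [← hdm, mul_comm]⟩
        exact (Nat.dvd_mod_iff h4).mpr h3
      · have hmod : g ^ (n % (p-1)) = g ^ n := by
          rw [← hgord]; exact pow_mod_orderOf g n
        show ((g ^ (n % (p-1)) : (ZMod p)ˣ) : ZMod p) = z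
        rw [hmod, hn, IsUnit.unit_spec]
  rw [← hcount]
  have hset : (Finset.range (p-1)).filter (fun k => m ∣ k)
      = (Finset.range d).image (fun t => t * m) := by
    ext k
    simp only [Finset.mem_filter, Finset.mem_range, Finset.mem_image]
    constructor
    · rintro ⟨hk, t, rfl⟩
      have h5 : m * t < m * d := by
        calc m * t < p - 1 := hk
        _ = d * m := hdm.symm
        _ = m * d := mul_comm d m
      exact ⟨t, lt_of_mul_lt_mul_left h5 (Nat.zero_le m), mul_comm t m⟩
    · rintro ⟨t, ht, rfl⟩
      have h5 : t * m < d * m := (Nat.mul_lt_mul_right hm0).mpr ht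
      exact ⟨by omega, ⟨t, mul_comm t m⟩⟩
  rw [hset, Finset.card_image_of_injective _ (fun a b h => Nat.eq_of_mul_eq_mul_right hm0 h),
    Finset.card_range]

end Card
section Master
variable {p : ℕ} [NeZero p] [Fact p.Prime]

set_option maxHeartbeats 1000000 in
lemma master (χ : DirichletCharacter ℂ p) {d : ℕ} (hd : (Kf χ).card = d) :
    (p:ℝ) * ∑ q ∈ ((sS p ×ˢ sS p).filter (fun q => χ q.1 = χ q.2)),
        ((p:ℝ) - max (q.1.val:ℝ) (q.2.val:ℝ))
      = (p:ℝ)^2*((p:ℝ)-1)/2 + ((d:ℝ)-1)*((p:ℝ)*((p:ℝ)^2-1)/12)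
        + (∑ v ∈ Iv χ, (∑ x ∈ fib χ v, (x.val:ℝ))^2)
        - (p:ℝ)*((p:ℝ)-1)*(2*(p:ℝ)-1)/6 := by
  have h1mem : (1 : ZMod p) ∈ Kf χ := by
    rw [Kf, Finset.mem_filter]
    exact ⟨mem_sS.mpr one_ne_zero, map_one χ⟩
  rw [Finset.mul_sum]
  rw [bij_pairs χ (fun a b => (p:ℝ) * ((p:ℝ) - max (a.val:ℝ) (b.val:ℝ)))]
  rw [← Finset.add_sum_erase _ _ h1mem]
  -- the diagonal term
  have hdiag : ∑ b ∈ sS p, (p:ℝ) * ((p:ℝ) - max (((1:ZMod p)*b).val:ℝ) (b.val:ℝ))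
      = (p:ℝ) * ((p:ℝ)*((p:ℝ)-1)/2) := by
    have : ∀ b ∈ sS p, (p:ℝ) * ((p:ℝ) - max (((1:ZMod p)*b).val:ℝ) (b.val:ℝ))
        = (p:ℝ)*(p:ℝ) - (p:ℝ)*(b.val:ℝ) := by
      intro b _
      rw [one_mul, max_self]
      ring
    rw [Finset.sum_congr rfl this, Finset.sum_sub_distrib, Finset.sum_const, ← Finset.mul_sum,
      sum_s_V, card_sS]
    have hp1 : (1:ℕ) ≤ p := Nat.one_le_iff_ne_zero.mpr (NeZero.ne p)
    rw [nsmul_eq_mul, Nat.cast_sub hp1]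
    push_cast
    ring
  rw [hdiag]
  -- off-diagonal terms via per_c
  have hoff : ∀ c ∈ (Kf χ).erase 1,
      ∑ b ∈ sS p, (p:ℝ) * ((p:ℝ) - max (((c:ZMod p)*b).val:ℝ) (b.val:ℝ))
        = (p:ℝ)*((p:ℝ)^2-1)/12 + ∑ b ∈ sS p, ((c*b).val:ℝ) * (b.val:ℝ) := by
    intro c hc
    rw [Finset.mem_erase, Kf, Finset.mem_filter] at hc
    exact per_c (mem_sS.mp hc.2.1) hc.1
  rw [Finset.sum_congr rfl hoff, Finset.sum_add_distrib, Finset.sum_const]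
  have hcard : ((Kf χ).erase 1).card = d - 1 := by
    rw [Finset.card_erase_of_mem h1mem, hd]
  rw [hcard]
  -- reassemble the D-sum: add back c = 1
  have hD1 : ∑ b ∈ sS p, (((1:ZMod p)*b).val:ℝ) * (b.val:ℝ) = (p:ℝ)*((p:ℝ)-1)*(2*(p:ℝ)-1)/6 := by
    have : ∀ b ∈ sS p, (((1:ZMod p)*b).val:ℝ) * (b.val:ℝ) = (b.val:ℝ)^2 := by
      intro b _; rw [one_mul, sq]
    rw [Finset.sum_congr rfl this, sum_s_V2]
  have hDsum : ∑ c ∈ (Kf χ).erase 1, ∑ b ∈ sS p, ((c*b).val:ℝ) * (b.val:ℝ)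
      = (∑ v ∈ Iv χ, (∑ x ∈ fib χ v, (x.val:ℝ))^2) - (p:ℝ)*((p:ℝ)-1)*(2*(p:ℝ)-1)/6 := by
    have h := bij_pairs χ (fun a b => (a.val:ℝ) * (b.val:ℝ))
    rw [pairs_to_fibers χ] at h
    rw [← Finset.add_sum_erase _ _ h1mem] at h
    rw [hD1] at h
    linarith [h]
  rw [hDsum]
  have hd1 : (1:ℕ) ≤ d := by
    have : 0 < (Kf χ).card := Finset.card_pos.mpr ⟨1, h1mem⟩
    omega
  rw [nsmul_eq_mul, Nat.cast_sub hd1]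
  push_cast
  ring

lemma lower_SS (χ : DirichletCharacter ℂ p) {d m : ℕ} (hd : (Kf χ).card = d)
    (hdm : d * m = p - 1) (hIv : (Iv χ).card = m) (hm0 : 0 < m) :
    (d:ℝ)*(p:ℝ)^2*((p:ℝ)-1)/4 ≤ ∑ v ∈ Iv χ, (∑ x ∈ fib χ v, (x.val:ℝ))^2 := by
  have hCS := sq_sum_le_card_mul_sum_sq (s := Iv χ) (f := fun v => ∑ x ∈ fib χ v, (x.val:ℝ))
  rw [hIv] at hCS
  have hσ : ∑ v ∈ Iv χ, ∑ x ∈ fib χ v, (x.val:ℝ) = (p:ℝ)*((p:ℝ)-1)/2 := by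
    rw [sum_fiber χ (fun x => (x.val:ℝ)), sum_s_V]
  rw [hσ] at hCS
  have hreal : (d:ℝ) * (m:ℝ) = (p:ℝ) - 1 := by
    have hp1 : (1:ℕ) ≤ p := Nat.one_le_iff_ne_zero.mpr (NeZero.ne p)
    have h2 : ((d * m : ℕ) : ℝ) = ((p - 1 : ℕ) : ℝ) := by rw [hdm]
    rw [Nat.cast_mul, Nat.cast_sub hp1] at h2
    exact_mod_cast h2
  have hm1 : (1:ℝ) ≤ (m:ℝ) := by exact_mod_cast hm0
  have hmul : (m:ℝ) * ((d:ℝ)*(p:ℝ)^2*((p:ℝ)-1)/4) ≤ (m:ℝ) * ∑ v ∈ Iv χ, (∑ x ∈ fib χ v, (x.val:ℝ))^2 := by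
    calc (m:ℝ) * ((d:ℝ)*(p:ℝ)^2*((p:ℝ)-1)/4) = ((p:ℝ)*((p:ℝ)-1)/2)^2 := by
          rw [← hreal]; ring
    _ ≤ (m:ℝ) * ∑ v ∈ Iv χ, (∑ x ∈ fib χ v, (x.val:ℝ))^2 := hCS
  exact le_of_mul_le_mul_left hmul (by linarith)

set_option maxHeartbeats 1000000 in
lemma upper_SS (χ : DirichletCharacter ℂ p) {d m : ℕ} (hd : (Kf χ).card = d)
    (hdm : d * m = p - 1) (hIv : (Iv χ).card = m) :
    ∑ v ∈ Iv χ, (∑ x ∈ fib χ v, (x.val:ℝ))^2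
      ≤ (d:ℝ)*(p:ℝ)^2*((p:ℝ)-1)/4 + (d:ℝ)*(p:ℝ)*((p:ℝ)-1)*((p:ℝ)-2)/12 := by
  have hfibd : ∀ v ∈ Iv χ, (fib χ v).card = d := by
    intro v hv
    rw [Iv, Finset.mem_image] at hv
    obtain ⟨a, ha, rfl⟩ := hv
    rw [fib_card χ ha, hd]
  have hpt : ∀ v ∈ Iv χ, (∑ x ∈ fib χ v, (x.val:ℝ))^2
      ≤ (d:ℝ) * (∑ x ∈ fib χ v, ((x.val:ℝ) - (p:ℝ)/2)^2)
        + (d:ℝ)*(p:ℝ)*(∑ x ∈ fib χ v, ((x.val:ℝ) - (p:ℝ)/2))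
        + (d:ℝ)^2*(p:ℝ)^2/4 := by
    intro v hv
    have hc := hfibd v hv
    have hCS := sq_sum_le_card_mul_sum_sq (s := fib χ v)
      (f := fun x => (x.val:ℝ) - (p:ℝ)/2)
    rw [hc] at hCS
    have hτ : ∑ x ∈ fib χ v, ((x.val:ℝ) - (p:ℝ)/2)
        = (∑ x ∈ fib χ v, (x.val:ℝ)) - (d:ℝ)*((p:ℝ)/2) := by
      rw [Finset.sum_sub_distrib, Finset.sum_const, hc, nsmul_eq_mul]
    have hσ : (∑ x ∈ fib χ v, (x.val:ℝ))
        = (∑ x ∈ fib χ v, ((x.val:ℝ) - (p:ℝ)/2)) + (d:ℝ)*((p:ℝ)/2) := by rw [hτ]; ring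
    rw [hσ]
    nlinarith [hCS]
  have hsum := Finset.sum_le_sum hpt
  have e1 : ∑ v ∈ Iv χ, ((d:ℝ) * (∑ x ∈ fib χ v, ((x.val:ℝ) - (p:ℝ)/2)^2)
        + (d:ℝ)*(p:ℝ)*(∑ x ∈ fib χ v, ((x.val:ℝ) - (p:ℝ)/2))
        + (d:ℝ)^2*(p:ℝ)^2/4)
      = (d:ℝ) * (∑ v ∈ Iv χ, ∑ x ∈ fib χ v, ((x.val:ℝ) - (p:ℝ)/2)^2)
        + (d:ℝ)*(p:ℝ)*(∑ v ∈ Iv χ, ∑ x ∈ fib χ v, ((x.val:ℝ) - (p:ℝ)/2))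
        + (m:ℝ)*((d:ℝ)^2*(p:ℝ)^2/4) := by
    rw [Finset.sum_add_distrib, Finset.sum_add_distrib, ← Finset.mul_sum, ← Finset.mul_sum,
      Finset.sum_const, hIv, nsmul_eq_mul]
  have e2 : ∑ v ∈ Iv χ, ∑ x ∈ fib χ v, ((x.val:ℝ) - (p:ℝ)/2)^2
      = (p:ℝ)*((p:ℝ)-1)*((p:ℝ)-2)/12 := by
    rw [sum_fiber χ (fun x => ((x.val:ℝ) - (p:ℝ)/2)^2)]
    have hcg : ∀ x ∈ sS p, ((x.val:ℝ) - (p:ℝ)/2)^2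
        = (p:ℝ)^2/4 + (-(p:ℝ))*(x.val:ℝ) + (x.val:ℝ)^2 := by
      intro x _; ring
    rw [Finset.sum_congr rfl hcg]
    rw [Finset.sum_add_distrib, Finset.sum_add_distrib, Finset.sum_const, ← Finset.mul_sum,
      sum_s_V, sum_s_V2, card_sS, nsmul_eq_mul]
    have hp1 : (1:ℕ) ≤ p := Nat.one_le_iff_ne_zero.mpr (NeZero.ne p)
    rw [Nat.cast_sub hp1]
    push_cast
    ring
  have e3 : ∑ v ∈ Iv χ, ∑ x ∈ fib χ v, ((x.val:ℝ) - (p:ℝ)/2) = 0 := by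
    rw [sum_fiber χ (fun x => ((x.val:ℝ) - (p:ℝ)/2))]
    rw [Finset.sum_sub_distrib, Finset.sum_const, sum_s_V, card_sS, nsmul_eq_mul]
    have hp1 : (1:ℕ) ≤ p := Nat.one_le_iff_ne_zero.mpr (NeZero.ne p)
    rw [Nat.cast_sub hp1]
    push_cast
    ring
  rw [e1, e2, e3] at hsum
  have hreal : (d:ℝ) * (m:ℝ) = (p:ℝ) - 1 := by
    have hp1 : (1:ℕ) ≤ p := Nat.one_le_iff_ne_zero.mpr (NeZero.ne p)
    have h2 : ((d * m : ℕ) : ℝ) = ((p - 1 : ℕ) : ℝ) := by rw [hdm]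
    rw [Nat.cast_mul, Nat.cast_sub hp1] at h2
    exact_mod_cast h2
  calc ∑ v ∈ Iv χ, (∑ x ∈ fib χ v, (x.val:ℝ))^2
      ≤ (d:ℝ) * ((p:ℝ)*((p:ℝ)-1)*((p:ℝ)-2)/12) + (d:ℝ)*(p:ℝ)*0 + (m:ℝ)*((d:ℝ)^2*(p:ℝ)^2/4) := hsum
    _ = (d:ℝ)*(p:ℝ)^2*((p:ℝ)-1)/4 + (d:ℝ)*(p:ℝ)*((p:ℝ)-1)*((p:ℝ)-2)/12 := by
        have : (m:ℝ)*((d:ℝ)^2*(p:ℝ)^2/4) = ((d:ℝ)*(m:ℝ))*((d:ℝ)*(p:ℝ)^2/4) := by ring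
        rw [this, hreal]
        ring

end Master
section StepA
variable {p : ℕ} [NeZero p] [Fact p.Prime]

lemma stepA (χ : DirichletCharacter ℂ p) :
    ∑ N ∈ Finset.Icc 1 (p-1),
        ((Finset.filter (fun q : ℕ × ℕ => χ (q.1 : ZMod p) = χ (q.2 : ZMod p))
          ((Finset.Icc 1 N) ×ˢ (Finset.Icc 1 N))).card)
      = ∑ q ∈ (Finset.filter (fun q : ℕ × ℕ => χ (q.1 : ZMod p) = χ (q.2 : ZMod p))
          ((Finset.Icc 1 (p-1)) ×ˢ (Finset.Icc 1 (p-1)))), (p - max q.1 q.2) := by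
  have h1 : ∀ N ∈ Finset.Icc 1 (p-1),
      ((Finset.filter (fun q : ℕ × ℕ => χ (q.1 : ZMod p) = χ (q.2 : ZMod p))
        ((Finset.Icc 1 N) ×ˢ (Finset.Icc 1 N))).card)
      = ∑ q ∈ (Finset.filter (fun q : ℕ × ℕ => χ (q.1 : ZMod p) = χ (q.2 : ZMod p))
          ((Finset.Icc 1 (p-1)) ×ˢ (Finset.Icc 1 (p-1)))),
          (if q.1 ≤ N ∧ q.2 ≤ N then 1 else 0) := by
    intro N hN
    rw [Finset.mem_Icc] at hN
    rw [Finset.sum_boole, Nat.cast_id]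
    congr 1
    ext ⟨a, b⟩
    simp only [Finset.mem_filter, Finset.mem_product, Finset.mem_Icc]
    constructor
    · rintro ⟨⟨⟨ha1, ha2⟩, hb1, hb2⟩, hv⟩
      exact ⟨⟨⟨⟨ha1, by omega⟩, ⟨hb1, by omega⟩⟩, hv⟩, ha2, hb2⟩
    · rintro ⟨⟨⟨⟨ha1, _⟩, ⟨hb1, _⟩⟩, hv⟩, ha2, hb2⟩
      exact ⟨⟨⟨ha1, ha2⟩, hb1, hb2⟩, hv⟩
  rw [Finset.sum_congr rfl h1, Finset.sum_comm]
  refine Finset.sum_congr rfl ?_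
  rintro ⟨a, b⟩ hab
  rw [Finset.mem_filter, Finset.mem_product, Finset.mem_Icc, Finset.mem_Icc] at hab
  obtain ⟨⟨⟨ha1, ha2⟩, hb1, hb2⟩, _⟩ := hab
  rw [Finset.sum_boole, Nat.cast_id]
  have hset : (Finset.Icc 1 (p-1)).filter (fun N => (a, b).1 ≤ N ∧ (a, b).2 ≤ N)
      = Finset.Icc (max a b) (p-1) := by
    ext N
    simp only [Finset.mem_filter, Finset.mem_Icc, max_le_iff]
    omega
  rw [hset, Nat.card_Icc]
  have hm : max a b ≤ p - 1 := max_le ha2 hb2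
  omega

lemma cast_pairs (χ : DirichletCharacter ℂ p) :
    ∑ q ∈ (Finset.filter (fun q : ℕ × ℕ => χ (q.1 : ZMod p) = χ (q.2 : ZMod p))
          ((Finset.Icc 1 (p-1)) ×ˢ (Finset.Icc 1 (p-1)))), ((p - max q.1 q.2 : ℕ) : ℝ)
      = ∑ q ∈ ((sS p ×ˢ sS p).filter (fun q => χ q.1 = χ q.2)),
          ((p:ℝ) - max (q.1.val:ℝ) (q.2.val:ℝ)) := by
  have hp1 : (1:ℕ) ≤ p := Nat.one_le_iff_ne_zero.mpr (NeZero.ne p)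
  refine Finset.sum_nbij' (fun q => ((q.1 : ZMod p), (q.2 : ZMod p)))
    (fun q => (q.1.val, q.2.val)) ?_ ?_ ?_ ?_ ?_
  · rintro ⟨a, b⟩ hab
    rw [Finset.mem_filter, Finset.mem_product, Finset.mem_Icc, Finset.mem_Icc] at hab
    obtain ⟨⟨⟨ha1, ha2⟩, hb1, hb2⟩, hv⟩ := hab
    simp only [Finset.mem_filter, Finset.mem_product]
    have hva : ((a : ZMod p)).val = a := ZMod.val_cast_of_lt (by omega)
    have hvb : ((b : ZMod p)).val = b := ZMod.val_cast_of_lt (by omega)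
    refine ⟨⟨mem_sS.mpr ?_, mem_sS.mpr ?_⟩, hv⟩
    · intro h0; rw [h0, ZMod.val_zero] at hva; omega
    · intro h0; rw [h0, ZMod.val_zero] at hvb; omega
  · rintro ⟨a, b⟩ hab
    rw [Finset.mem_filter, Finset.mem_product] at hab
    obtain ⟨⟨ha, hb⟩, hv⟩ := hab
    have ha0 : a ≠ 0 := mem_sS.mp ha
    have hb0 : b ≠ 0 := mem_sS.mp hb
    simp only [Finset.mem_filter, Finset.mem_product, Finset.mem_Icc]
    have hva : a.val ≠ 0 := fun h => ha0 ((ZMod.val_eq_zero a).mp h)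
    have hvb : b.val ≠ 0 := fun h => hb0 ((ZMod.val_eq_zero b).mp h)
    have hlta := ZMod.val_lt a
    have hltb := ZMod.val_lt b
    refine ⟨⟨⟨by omega, by omega⟩, by omega, by omega⟩, ?_⟩
    show χ ((a.val : ZMod p)) = χ ((b.val : ZMod p))
    rw [cast_val_eq, cast_val_eq]
    exact hv
  · rintro ⟨a, b⟩ hab
    rw [Finset.mem_filter, Finset.mem_product, Finset.mem_Icc, Finset.mem_Icc] at hab
    obtain ⟨⟨⟨ha1, ha2⟩, hb1, hb2⟩, _⟩ := hab
    simp only [Prod.mk.injEq]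
    exact ⟨ZMod.val_cast_of_lt (by omega), ZMod.val_cast_of_lt (by omega)⟩
  · rintro ⟨a, b⟩ _
    simp only [Prod.mk.injEq]
    exact ⟨cast_val_eq a, cast_val_eq b⟩
  · rintro ⟨a, b⟩ hab
    rw [Finset.mem_filter, Finset.mem_product, Finset.mem_Icc, Finset.mem_Icc] at hab
    obtain ⟨⟨⟨ha1, ha2⟩, hb1, hb2⟩, _⟩ := hab
    have hva : ((a : ZMod p)).val = a := ZMod.val_cast_of_lt (by omega)
    have hvb : ((b : ZMod p)).val = b := ZMod.val_cast_of_lt (by omega)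
    have hmle : max a b ≤ p := by omega
    rw [Nat.cast_sub hmle, Nat.cast_max]
    rw [hva, hvb]

end StepA
end ElmaAux

/-- Elma's character sum `A(p,d)`, attached to the character `χ`. -/
noncomputable def elmaSum (p : ℕ) (χ : DirichletCharacter ℂ p) : ℝ :=
  (1 / ((p : ℝ) - 1)) * ∑ N ∈ Finset.Icc 1 (p - 1),
    ((Finset.filter (fun q : ℕ × ℕ => χ (q.1 : ZMod p) = χ (q.2 : ZMod p))
      ((Finset.Icc 1 N) ×ˢ (Finset.Icc 1 N))).card : ℝ)

theorem stmt3 (p : ℕ) [NeZero p] (hp : p.Prime) (hp2 : Odd p) (d : ℕ) (hd : Odd d)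
    (hdvd : d ∣ p - 1) (m : ℕ) (hm : m = (p - 1) / d)
    (χ : DirichletCharacter ℂ p) (hodd : χ (-1) = -1) (horder : orderOf χ = m) :
    ((4 * (d : ℝ) + 1) * p + d + 1) / 12 ≤ elmaSum p χ ∧
      elmaSum p χ ≤ ((5 * (d : ℝ) + 1) * p + d + 1) / 12 := by
  classical
  haveI : Fact p.Prime := ⟨hp⟩
  open ElmaAux in
  have hp3 : 3 ≤ p := by
    have h2 := hp.two_le
    rcases hp2 with ⟨k, hk⟩
    omega
  have hd0 : 0 < d := hd.pos
  have hdm : d * m = p - 1 := by rw [hm]; exact Nat.mul_div_cancel' hdvd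
  have hm0 : 0 < m := by
    rcases Nat.eq_zero_or_pos m with h | h
    · rw [h, mul_zero] at hdm; omega
    · exact h
  have hKf := ElmaAux.cardKf χ horder hdm hm0
  have hIv : (ElmaAux.Iv χ).card = m := by
    have h := ElmaAux.card_fibers χ
    rw [hKf] at h
    have h2 : m * d = p - 1 := by rw [mul_comm]; exact hdm
    exact Nat.eq_of_mul_eq_mul_right hd0 (h.trans h2.symm)
  set SS := ∑ v ∈ ElmaAux.Iv χ, (∑ x ∈ ElmaAux.fib χ v, (x.val:ℝ))^2 with hSSdef
  have hmaster := ElmaAux.master χ hKf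
  have hlow := ElmaAux.lower_SS χ hKf hdm hIv hm0
  have hupp := ElmaAux.upper_SS χ hKf hdm hIv
  set T0 := ∑ q ∈ ((ElmaAux.sS p ×ˢ ElmaAux.sS p).filter (fun q => χ q.1 = χ q.2)),
      ((p:ℝ) - max (q.1.val:ℝ) (q.2.val:ℝ)) with hT0def
  have hT : ∑ N ∈ Finset.Icc 1 (p-1),
      ((Finset.filter (fun q : ℕ × ℕ => χ (q.1 : ZMod p) = χ (q.2 : ZMod p))
        ((Finset.Icc 1 N) ×ˢ (Finset.Icc 1 N))).card : ℝ) = T0 := by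
    rw [← Nat.cast_sum, ElmaAux.stepA χ, Nat.cast_sum]
    exact ElmaAux.cast_pairs χ
  have hp1R : (0:ℝ) < (p:ℝ) - 1 := by
    have : (3:ℝ) ≤ (p:ℝ) := by exact_mod_cast hp3
    linarith
  have hpR : (0:ℝ) < (p:ℝ) := by linarith
  have hdR : (1:ℝ) ≤ (d:ℝ) := by exact_mod_cast hd0
  have hA : elmaSum p χ * ((p:ℝ) - 1) = T0 := by
    rw [elmaSum, hT]
    field_simp
  -- master in terms of elmaSum
  have hApT : elmaSum p χ * (((p:ℝ) - 1) * p) = ((p:ℝ)^2*((p:ℝ)-1)/2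
      + ((d:ℝ)-1)*((p:ℝ)*((p:ℝ)^2-1)/12) + SS - (p:ℝ)*((p:ℝ)-1)*(2*(p:ℝ)-1)/6) := by
    have : elmaSum p χ * (((p:ℝ) - 1) * p) = (p:ℝ) * (elmaSum p χ * ((p:ℝ)-1)) := by ring
    rw [this, hA, hT0def, hmaster]
  constructor
  · -- lower bound
    have hid : (p:ℝ)^2*((p:ℝ)-1)/2 + ((d:ℝ)-1)*((p:ℝ)*((p:ℝ)^2-1)/12)
        + (d:ℝ)*(p:ℝ)^2*((p:ℝ)-1)/4 - (p:ℝ)*((p:ℝ)-1)*(2*(p:ℝ)-1)/6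
        = (((4 * (d : ℝ) + 1) * p + d + 1) / 12) * (((p:ℝ) - 1) * p) := by ring
    have hle : (((4 * (d : ℝ) + 1) * p + d + 1) / 12) * (((p:ℝ) - 1) * p)
        ≤ elmaSum p χ * (((p:ℝ) - 1) * p) := by
      rw [hApT, ← hid]
      linarith [hlow, hSSdef.le, hSSdef.ge]
    exact le_of_mul_le_mul_right hle (by positivity)
  · -- upper bound
    have hle : elmaSum p χ * (((p:ℝ) - 1) * p)
        ≤ (((5 * (d : ℝ) + 1) * p + d + 1) / 12) * (((p:ℝ) - 1) * p) := by
      rw [hApT]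
      have hid2 : (((5 * (d : ℝ) + 1) * p + d + 1) / 12) * (((p:ℝ) - 1) * p)
          - ((p:ℝ)^2*((p:ℝ)-1)/2 + ((d:ℝ)-1)*((p:ℝ)*((p:ℝ)^2-1)/12)
            + ((d:ℝ)*(p:ℝ)^2*((p:ℝ)-1)/4 + (d:ℝ)*(p:ℝ)*((p:ℝ)-1)*((p:ℝ)-2)/12)
            - (p:ℝ)*((p:ℝ)-1)*(2*(p:ℝ)-1)/6)
          = (p:ℝ)*(((p:ℝ)-1)*(2*(d:ℝ)))/12 := by ring
      have hslack : (0:ℝ) ≤ (p:ℝ)*(((p:ℝ)-1)*(2*(d:ℝ)))/12 := by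
        have h1 : (0:ℝ) ≤ ((p:ℝ)-1)*(2*(d:ℝ)) := mul_nonneg hp1R.le (by linarith)
        have h2 : (0:ℝ) ≤ (p:ℝ)*(((p:ℝ)-1)*(2*(d:ℝ))) := mul_nonneg hpR.le h1
        linarith
      linarith [hupp, hSSdef.le, hSSdef.ge]
    exact le_of_mul_le_mul_right hle (by positivity)
end

section
/- Let p be a prime and λ an element of order k ≥ 3 in the multiplicative group (ℤ/pℤ)*. If (h₁,h₂) ∈ ℤ² is a nonzero pair with h₁ + h₂λ ≡ 0 mod p, then max(|h₁|,|h₂|) ≥ p^{1/φ(k)}/√8, where φ is Euler's totient function. -/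
theorem stmt10 (p : ℕ) (hp : p.Prime) (lam : (ZMod p)ˣ) (k : ℕ)
    (hk : orderOf lam = k) (hk3 : 3 ≤ k) (h₁ h₂ : ℤ) (hne : (h₁, h₂) ≠ (0, 0))
    (hcong : (h₁ : ZMod p) + (h₂ : ZMod p) * (lam : ZMod p) = 0) :
    (p : ℝ) ^ ((1 : ℝ) / (Nat.totient k)) / Real.sqrt 8 ≤ ((max |h₁| |h₂| : ℤ) : ℝ) := by
  have hk0 : k ≠ 0 := by omega
  set n := Nat.totient k with hn
  have hn1 : 1 ≤ n := Nat.totient_pos.mpr (by omega)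
  set H : ℤ := max |h₁| |h₂| with hH
  have hH1 : 1 ≤ H := by
    rcases (by
        by_contra hc
        push_neg at hc
        exact hne (by simp [hc.1, hc.2]) : h₁ ≠ 0 ∨ h₂ ≠ 0) with h | h
    · exact le_trans (Int.one_le_abs (by simpa using h)) (le_max_left _ _)
    · exact le_trans (Int.one_le_abs (by simpa using h)) (le_max_right _ _)
  have hH0 : (0:ℝ) ≤ (H:ℝ) := by exact_mod_cast hH1.trans' (by norm_num)
  -- It suffices to show p ≤ (2H)^n
  suffices key : (p : ℝ) ≤ (2*(H:ℝ))^n by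
    have h2H : (0:ℝ) ≤ 2*(H:ℝ) := by positivity
    have hs8 : (2:ℝ) ≤ Real.sqrt 8 := by
      nlinarith [Real.sq_sqrt (by norm_num : (0:ℝ) ≤ 8), Real.sqrt_nonneg (8:ℝ)]
    have h1 : (p:ℝ) ^ ((1:ℝ)/n) ≤ 2*(H:ℝ) := by
      have := Real.rpow_le_rpow (by positivity) key (by positivity : (0:ℝ) ≤ 1/n)
      rwa [← Real.rpow_natCast (2*(H:ℝ)) n, ← Real.rpow_mul h2H,
        mul_one_div, div_self (by exact_mod_cast (by omega : (n:ℕ) ≠ 0) : (n:ℝ) ≠ 0), Real.rpow_one] at this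
    calc (p:ℝ) ^ ((1:ℝ)/n) / Real.sqrt 8 ≤ (2*(H:ℝ)) / 2 := by
          apply div_le_div₀ h2H h1 (by norm_num) hs8
      _ = (H:ℝ) := by ring
  -- trivial case h₂ = 0
  by_cases hh2 : h₂ = 0
  · have hh1 : h₁ ≠ 0 := fun h => hne (by simp [h, hh2])
    have hdvd : (p:ℤ) ∣ h₁ := by
      have : ((h₁ : ℤ) : ZMod p) = 0 := by simpa [hh2] using hcong
      exact_mod_cast (ZMod.intCast_zmod_eq_zero_iff_dvd h₁ p).mp this
    have hple : (p:ℤ) ≤ |h₁| := Int.le_of_dvd (abs_pos.mpr hh1) (hdvd.trans (self_dvd_abs h₁))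
    have hpH : (p:ℝ) ≤ (H:ℝ) := by
      have : (p:ℤ) ≤ H := hple.trans (le_max_left _ _)
      exact_mod_cast this
    have hH1' : (1:ℝ) ≤ (H:ℝ) := by exact_mod_cast hH1
    calc (p:ℝ) ≤ 2*(H:ℝ) := by linarith
      _ ≤ (2*(H:ℝ))^n := le_self_pow₀ (by linarith) (by omega)
  -- main case
  · haveI := Fact.mk hp
    have hH1' : (1:ℝ) ≤ (H:ℝ) := by exact_mod_cast hH1
    set Φ : Polynomial ℤ := Polynomial.cyclotomic k ℤ with hΦ
    have hdegΦ : Φ.natDegree = n := Polynomial.natDegree_cyclotomic k ℤ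
    set R : ℤ := (Φ.scaleRoots h₂).eval (-h₁) with hR
    -- Step A : p ∣ R
    have hlam : IsPrimitiveRoot ((lam : ZMod p)) k := by
      have := IsPrimitiveRoot.orderOf (lam : ZMod p)
      rwa [orderOf_units, hk] at this
    have hdvd : (p:ℤ) ∣ R := by
      have h0 : Polynomial.eval₂ (Int.castRingHom (ZMod p)) ((lam:ZMod p)) Φ = 0 := by
        rw [Polynomial.eval₂_eq_eval_map, hΦ, Polynomial.map_cyclotomic]
        exact hlam.isRoot_cyclotomic (by omega)
      have hval : (Int.castRingHom (ZMod p)) h₂ * (lam:ZMod p) = ((-h₁ : ℤ) : ZMod p) := by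
        show ((h₂:ℤ) : ZMod p) * (lam:ZMod p) = ((-h₁ : ℤ) : ZMod p)
        push_cast
        linear_combination hcong
      have hcast : ((R:ℤ) : ZMod p) = 0 := by
        have h1 : ((R:ℤ) : ZMod p) = Polynomial.eval₂ (Int.castRingHom (ZMod p)) (((-h₁ : ℤ) : ZMod p)) (Φ.scaleRoots h₂) := by
          rw [Polynomial.eval₂_eq_eval_map]
          exact_mod_cast (Polynomial.eval_intCast_map (Int.castRingHom (ZMod p)) (Φ.scaleRoots h₂) (-h₁)).symm
        rw [h1, ← hval, Polynomial.scaleRoots_eval₂_mul, h0, mul_zero]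
      exact_mod_cast (ZMod.intCast_zmod_eq_zero_iff_dvd R p).mp hcast
    -- Step B : complex product formula
    have hh2C : ((h₂:ℂ)) ≠ 0 := by exact_mod_cast hh2
    have hμ := Complex.isPrimitiveRoot_exp k hk0
    have hcard : (primitiveRoots k ℂ).card = n := Complex.card_primitiveRoots k
    have hBC : (R : ℂ) = ∏ μ ∈ primitiveRoots k ℂ, (-(h₁:ℂ) - (h₂:ℂ)*μ) := by
      have hval : (Int.castRingHom ℂ) h₂ * ((-(h₁:ℂ))/(h₂:ℂ)) = ((-h₁ : ℤ) : ℂ) := by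
        show ((h₂:ℤ) : ℂ) * ((-(h₁:ℂ))/(h₂:ℂ)) = ((-h₁ : ℤ) : ℂ)
        push_cast
        field_simp
      have h1 : ((R:ℤ) : ℂ) = Polynomial.eval₂ (Int.castRingHom ℂ) (((-h₁ : ℤ) : ℂ)) (Φ.scaleRoots h₂) := by
        rw [Polynomial.eval₂_eq_eval_map]
        exact_mod_cast (Polynomial.eval_intCast_map (Int.castRingHom ℂ) (Φ.scaleRoots h₂) (-h₁)).symm
      rw [h1, ← hval, Polynomial.scaleRoots_eval₂_mul, hdegΦ, Polynomial.eval₂_eq_eval_map,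
        hΦ, Polynomial.map_cyclotomic, Polynomial.cyclotomic_eq_prod_X_sub_primitiveRoots hμ]
      rw [Polynomial.eval_prod, ← hcard, ← Finset.prod_const ((Int.castRingHom ℂ) h₂), ← Finset.prod_mul_distrib]
      refine Finset.prod_congr rfl fun μ hμ' => ?_
      show ((h₂:ℤ):ℂ) * _ = _
      simp only [Polynomial.eval_sub, Polynomial.eval_X, Polynomial.eval_C]
      push_cast
      field_simp
    -- each factor is nonzero
    have hfac : ∀ μ ∈ primitiveRoots k ℂ, -(h₁:ℂ) - (h₂:ℂ)*μ ≠ 0 := by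
      intro μ hμmem hzero
      have hμp : IsPrimitiveRoot μ k := isPrimitiveRoot_of_mem_primitiveRoots hμmem
      have hnorm1 : ‖μ‖ = 1 := Complex.norm_eq_one_of_pow_eq_one hμp.pow_eq_one hk0
      have heq : (h₂:ℂ)*μ = -(h₁:ℂ) := by linear_combination -hzero
      have habs : |h₁| = |h₂| := by
        have := congrArg norm heq
        rw [norm_mul, hnorm1, mul_one, norm_neg] at this
        have h2 : |(h₂:ℝ)| = |(h₁:ℝ)| := by
          simpa using this
        rw [← Int.cast_abs, ← Int.cast_abs] at h2
        exact_mod_cast h2.symm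
      have hμval : μ = 1 ∨ μ = -1 := by
        rcases abs_eq_abs.mp habs with h | h
        · right
          have hc : ((h₁:ℤ):ℂ) = ((h₂:ℤ):ℂ) := by exact_mod_cast congrArg ((Int.cast : ℤ → ℂ)) h
          have hz : (h₂:ℂ) * (μ + 1) = 0 := by linear_combination -hzero - hc
          rcases mul_eq_zero.mp hz with h' | h'
          · exact absurd h' hh2C
          · linear_combination h'
        · left
          have hc : ((h₁:ℤ):ℂ) = -((h₂:ℤ):ℂ) := by exact_mod_cast congrArg ((Int.cast : ℤ → ℂ)) h
          have hz : (h₂:ℂ) * (μ - 1) = 0 := by linear_combination -hzero - hc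
          rcases mul_eq_zero.mp hz with h' | h'
          · exact absurd h' hh2C
          · linear_combination h'
      have hsq : μ^2 = 1 := by rcases hμval with h | h <;> simp [h]
      have hdvd2 := hμp.dvd_of_pow_eq_one 2 hsq
      have := Nat.le_of_dvd (by norm_num) hdvd2
      omega
    have hR0 : R ≠ 0 := by
      intro h
      rw [h] at hBC
      exact Finset.prod_ne_zero_iff.mpr hfac (by exact_mod_cast hBC.symm)
    -- bound
    have hple : (p:ℤ) ≤ |R| := Int.le_of_dvd (abs_pos.mpr hR0) ((dvd_abs _ _).mpr hdvd)
    have hbound : |(R:ℝ)| ≤ (2*(H:ℝ))^n := by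
      have : ‖(R:ℂ)‖ ≤ (2*(H:ℝ))^n := by
        rw [hBC]
        calc ‖∏ μ ∈ primitiveRoots k ℂ, (-(h₁:ℂ) - (h₂:ℂ)*μ)‖
            = ∏ μ ∈ primitiveRoots k ℂ, ‖-(h₁:ℂ) - (h₂:ℂ)*μ‖ := norm_prod _ _
          _ ≤ ∏ _μ ∈ primitiveRoots k ℂ, (2*(H:ℝ)) := by
              apply Finset.prod_le_prod (fun _ _ => norm_nonneg _)
              intro μ hμmem
              have hnorm1 : ‖μ‖ = 1 := Complex.norm_eq_one_of_pow_eq_one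
                (isPrimitiveRoot_of_mem_primitiveRoots hμmem).pow_eq_one hk0
              calc ‖-(h₁:ℂ) - (h₂:ℂ)*μ‖ ≤ ‖-(h₁:ℂ)‖ + ‖(h₂:ℂ)*μ‖ := norm_sub_le _ _
                _ = (|h₁|:ℝ) + (|h₂|:ℝ) := by
                    rw [norm_neg, norm_mul, hnorm1, mul_one, Complex.norm_intCast,
                      Complex.norm_intCast, ← Int.cast_abs, ← Int.cast_abs]
                _ ≤ (H:ℝ) + (H:ℝ) := by
                    have h1 : |h₁| ≤ H := le_max_left _ _
                    have h2 : |h₂| ≤ H := le_max_right _ _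
                    have h1' : (|h₁|:ℝ) ≤ (H:ℝ) := by exact_mod_cast h1
                    have h2' : (|h₂|:ℝ) ≤ (H:ℝ) := by exact_mod_cast h2
                    linarith
                _ = 2*(H:ℝ) := by ring
          _ = (2*(H:ℝ))^(primitiveRoots k ℂ).card := Finset.prod_const _
          _ = (2*(H:ℝ))^n := by rw [hcard]
      simpa [Complex.norm_intCast] using this
    have : (p:ℝ) ≤ |(R:ℝ)| := by
      have h1 : ((p:ℤ):ℝ) ≤ (|R|:ℝ) := by exact_mod_cast hple
      simpa [Int.cast_abs] using h1
    linarith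
end

section
/- Let p be an odd prime, d an odd divisor of p-1 with d > 1, m = (p-1)/d, and χ an odd character mod p of order m. If M(p,m) := (2/m)·Σ_{j=1}^{m/2}|L(1,χ^{2j-1})|² ≤ π²/6, then the relative class number satisfies h⁻_{p,d} ≤ 2·(p/24)^{m/4}. -/
theorem stmt19 (p : ℕ) [NeZero p] (hp : p.Prime) (hp2 : Odd p) (d : ℕ) (hd : Odd d)
    (hd1 : 1 < d) (hdvd : d ∣ p - 1) (m : ℕ) (hm : m = (p - 1) / d)
    (χ : DirichletCharacter ℂ p) (hodd : χ (-1) = -1) (horder : orderOf χ = m)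
    (h : ℕ)
    (hrel : (h : ℝ) = 2 * ∏ j ∈ Finset.range (m / 2),
      (Real.sqrt p / (2 * Real.pi)) * ‖DirichletCharacter.LFunction (χ ^ (2 * j + 1)) 1‖)
    (hM : (2 / (m : ℝ)) * ∑ j ∈ Finset.range (m / 2),
        ‖DirichletCharacter.LFunction (χ ^ (2 * j + 1)) 1‖ ^ 2 ≤ Real.pi ^ 2 / 6) :
    (h : ℝ) ≤ 2 * ((p : ℝ) / 24) ^ ((m : ℝ) / 4) := by
  set a : ℕ → ℝ := fun j => ‖DirichletCharacter.LFunction (χ ^ (2 * j + 1)) 1‖ with ha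
  set n := m / 2 with hn
  -- m is even and positive
  have hp1 : 0 < p - 1 := by
    have := hp.two_le
    omega
  have hdle : d ≤ p - 1 := Nat.le_of_dvd hp1 hdvd
  have hm1 : 1 ≤ m := by
    rw [hm]
    exact (Nat.one_le_div_iff (by omega)).mpr hdle
  have heven : Even m := by
    have hmul : d * m = p - 1 := by
      rw [hm, Nat.mul_div_cancel' hdvd]
    have hpe : Even (p - 1) := by
      rcases hp2 with ⟨k, hk⟩
      exact ⟨k, by omega⟩
    rw [← hmul] at hpe
    rcases (Nat.even_mul.mp hpe) with h1 | h2
    · exact absurd h1 (Nat.not_even_iff_odd.mpr hd)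
    · exact h2
  obtain ⟨k, hk⟩ := heven
  have hm2n : m = 2 * n := by omega
  have hn1 : 1 ≤ n := by omega
  have hnR : (0:ℝ) < (n:ℝ) := by exact_mod_cast hn1
  have hpi : (0:ℝ) < Real.pi := Real.pi_pos
  have hann : ∀ j ∈ Finset.range n, (0:ℝ) ≤ a j ^ 2 := fun j _ => sq_nonneg _
  -- AM-GM
  have amgm : ∏ j ∈ Finset.range n, (a j ^ 2) ^ ((n:ℝ)⁻¹) ≤
      ∑ j ∈ Finset.range n, (n:ℝ)⁻¹ * (a j ^ 2) := by
    apply Real.geom_mean_le_arith_mean_weighted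
    · intro i _; positivity
    · rw [Finset.sum_const, Finset.card_range, nsmul_eq_mul, mul_inv_cancel₀ hnR.ne']
    · exact hann
  have hMn : ∑ j ∈ Finset.range n, (n:ℝ)⁻¹ * (a j ^ 2) ≤ Real.pi ^ 2 / 6 := by
    rw [← Finset.mul_sum]
    have : (n:ℝ)⁻¹ = 2 / (m:ℝ) := by
      rw [hm2n]; push_cast; field_simp
    rw [this]
    exact hM
  have key : ∏ j ∈ Finset.range n, a j ^ 2 ≤ (Real.pi ^ 2 / 6) ^ n := by
    have h1 : ∏ j ∈ Finset.range n, a j ^ 2 =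
        (∏ j ∈ Finset.range n, (a j ^ 2) ^ ((n:ℝ)⁻¹)) ^ n := by
      rw [← Finset.prod_pow]
      refine Finset.prod_congr rfl fun j _ => ?_
      rw [← Real.rpow_natCast ((a j ^ 2) ^ ((n:ℝ)⁻¹)) n, ← Real.rpow_mul (sq_nonneg _),
        inv_mul_cancel₀ hnR.ne', Real.rpow_one]
    rw [h1]
    exact pow_le_pow_left₀ (Finset.prod_nonneg fun j _ => Real.rpow_nonneg (sq_nonneg _) _)
      (amgm.trans hMn) n
  -- rewrite h
  have hprod : (h:ℝ) = 2 * (Real.sqrt p / (2 * Real.pi)) ^ n * ∏ j ∈ Finset.range n, a j := by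
    rw [hrel, Finset.prod_mul_distrib, Finset.prod_const, Finset.card_range, mul_assoc]
  have hhn : (0:ℝ) ≤ (h:ℝ) := Nat.cast_nonneg h
  have hrhs : (0:ℝ) ≤ 2 * ((p : ℝ) / 24) ^ ((m : ℝ) / 4) := by positivity
  -- square both sides
  rw [← pow_le_pow_iff_left₀ hhn hrhs (two_ne_zero), hprod]
  have hc : (Real.sqrt p / (2 * Real.pi)) ^ 2 = (p:ℝ) / (4 * Real.pi ^ 2) := by
    rw [div_pow, Real.sq_sqrt (Nat.cast_nonneg p)]
    ring_nf
  have hsq : (2 * (Real.sqrt p / (2 * Real.pi)) ^ n * ∏ j ∈ Finset.range n, a j) ^ 2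
      = 4 * ((p:ℝ) / (4 * Real.pi ^ 2)) ^ n * ∏ j ∈ Finset.range n, a j ^ 2 := by
    rw [mul_pow, mul_pow, ← Finset.prod_pow, ← pow_mul, mul_comm n 2, pow_mul, hc]
    norm_num
  rw [hsq]
  have hb : (0:ℝ) ≤ (p:ℝ) / 24 := by positivity
  have hrhs2 : (2 * ((p:ℝ) / 24) ^ ((m:ℝ) / 4)) ^ 2 = 4 * ((p:ℝ) / 24) ^ n := by
    rw [mul_pow, ← Real.rpow_natCast (((p:ℝ) / 24) ^ ((m:ℝ) / 4)) 2, ← Real.rpow_mul hb]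
    have he : (m:ℝ) / 4 * ((2:ℕ):ℝ) = (n:ℝ) := by
      rw [hm2n]; push_cast; ring
    rw [he, Real.rpow_natCast]
    norm_num
  rw [hrhs2]
  calc 4 * ((p:ℝ) / (4 * Real.pi ^ 2)) ^ n * ∏ j ∈ Finset.range n, a j ^ 2
      ≤ 4 * ((p:ℝ) / (4 * Real.pi ^ 2)) ^ n * (Real.pi ^ 2 / 6) ^ n := by
        apply mul_le_mul_of_nonneg_left key
        positivity
    _ = 4 * ((p:ℝ) / 24) ^ n := by
        rw [mul_assoc, ← mul_pow]
        congr 2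
        field_simp
        ring
end
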